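/- Let H be a complex Hilbert space, let ψ, κ ∈ H, let (v_j)_{j∈ℕ} be a family of vectors in H with ∑_j ‖v_j‖² ≤ 2 Re⟨ψ, κ⟩, and let (α_j)_{j∈ℕ} be complex numbers with c := ∑_j |α_j|² < ∞. Then ‖∑_j \overline{α_j} v_j‖ ≤ (1/√2) ‖κ + (c/2)·ψ‖ + (c/(2√2)) ‖ψ‖. -/

import Mathlib

open scoped InnerProductSpace

lemma tsum_cs (f g : ℕ → ℝ) (_hg : ∀ i, 0 ≤ g i)
    (hf2 : Summable (fun i => f i ^ 2)) (hg2 : Summable fun i => g i ^ 2)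
    (hfg : Summable fun i => f i * g i) :
    ∑' i, f i * g i ≤ Real.sqrt (∑' i, f i ^ 2) * Real.sqrt (∑' i, g i ^ 2) := by
  refine Summable.tsum_le_of_sum_le hfg fun s => ?_
  refine (Real.sum_mul_le_sqrt_mul_sqrt s f g).trans ?_
  gcongr <;>
    exact Summable.sum_le_tsum s (fun i _ => by positivity) (by assumption)

theorem dissipative_perturbation_relative_bound
    {H : Type*} [NormedAddCommGroup H] [InnerProductSpace ℂ H] [CompleteSpace H]
    (ψ κ : H) (v : ℕ → H) (α : ℕ → ℂ)
    (hv : Summable fun j => ‖v j‖ ^ 2)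
    (hdiss : ∑' j, ‖v j‖ ^ 2 ≤ 2 * (⟪ψ, κ⟫_ℂ).re)
    (hα : Summable fun j => ‖α j‖ ^ 2) :
    Summable (fun j => (starRingEnd ℂ) (α j) • v j) ∧
    ‖∑' j, (starRingEnd ℂ) (α j) • v j‖ ≤
      (1 / Real.sqrt 2) * ‖κ + ((((∑' j, ‖α j‖ ^ 2 : ℝ) / 2 : ℝ) : ℂ)) • ψ‖ +
        ((∑' j, ‖α j‖ ^ 2 : ℝ) / (2 * Real.sqrt 2)) * ‖ψ‖ := by
  set c : ℝ := ∑' j, ‖α j‖ ^ 2 with hc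
  have hc0 : 0 ≤ c := tsum_nonneg fun j => by positivity
  -- summability of the norms
  have hN : Summable (fun j => ‖α j‖ * ‖v j‖) := by
    refine Summable.of_nonneg_of_le (fun j => by positivity) (fun j => ?_)
      (((hα.add hv).div_const 2))
    have := sq_nonneg (‖α j‖ - ‖v j‖)
    nlinarith
  have hNeq : ∀ j, ‖(starRingEnd ℂ) (α j) • v j‖ = ‖α j‖ * ‖v j‖ := by
    intro j; rw [norm_smul]; simp
  have hS : Summable (fun j => (starRingEnd ℂ) (α j) • v j) := by
    refine Summable.of_norm ?_
    simpa only [hNeq] using hN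
  refine ⟨hS, ?_⟩
  set b : ℝ := ‖κ + (((c / 2 : ℝ) : ℂ)) • ψ‖ with hb
  have hb0 : 0 ≤ b := norm_nonneg _
  have hψ0 : 0 ≤ ‖ψ‖ := norm_nonneg _
  -- step 1 : norm of tsum ≤ tsum of norms
  have h1 : ‖∑' j, (starRingEnd ℂ) (α j) • v j‖ ≤ ∑' j, ‖α j‖ * ‖v j‖ := by
    calc ‖∑' j, (starRingEnd ℂ) (α j) • v j‖ ≤ ∑' j, ‖(starRingEnd ℂ) (α j) • v j‖ :=
          norm_tsum_le_tsum_norm (by simpa only [hNeq] using hN)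
      _ = ∑' j, ‖α j‖ * ‖v j‖ := by simp only [hNeq]
  -- step 2 : Cauchy-Schwarz
  have h2 : ∑' j, ‖α j‖ * ‖v j‖ ≤ Real.sqrt c * Real.sqrt (∑' j, ‖v j‖ ^ 2) :=
    tsum_cs _ _ (fun j => norm_nonneg _) hα hv hN
  have h2' : Real.sqrt c * Real.sqrt (∑' j, ‖v j‖ ^ 2)
      = Real.sqrt (c * ∑' j, ‖v j‖ ^ 2) := (Real.sqrt_mul hc0 _).symm
  -- inner product identity
  have hinner : (⟪ψ, κ + (((c / 2 : ℝ) : ℂ)) • ψ⟫_ℂ).re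
      = (⟪ψ, κ⟫_ℂ).re + (c / 2) * ‖ψ‖ ^ 2 := by
    rw [inner_add_right, inner_smul_right, inner_self_eq_norm_sq_to_K]
    simp [Complex.add_re, Complex.mul_re]
    exact Or.inl (by rw [← Complex.ofReal_pow]; exact Complex.ofReal_re _)
  have hre : (⟪ψ, κ + (((c / 2 : ℝ) : ℂ)) • ψ⟫_ℂ).re ≤ ‖ψ‖ * b := by
    calc (⟪ψ, κ + (((c / 2 : ℝ) : ℂ)) • ψ⟫_ℂ).re ≤ ‖⟪ψ, κ + (((c / 2 : ℝ) : ℂ)) • ψ⟫_ℂ‖ :=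
          Complex.re_le_norm _
      _ ≤ ‖ψ‖ * b := norm_inner_le_norm _ _
  have hkey : c * ∑' j, ‖v j‖ ^ 2 ≤
      ((1 / Real.sqrt 2) * b + (c / (2 * Real.sqrt 2)) * ‖ψ‖) ^ 2 := by
    have hs2 : Real.sqrt 2 ^ 2 = 2 := Real.sq_sqrt (by norm_num)
    have hs2pos : 0 < Real.sqrt 2 := Real.sqrt_pos.mpr (by norm_num)
    have h3 : c * ∑' j, ‖v j‖ ^ 2 ≤ 2 * c * ‖ψ‖ * b - c ^ 2 * ‖ψ‖ ^ 2 := by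
      have := mul_le_mul_of_nonneg_left hdiss hc0
      nlinarith [hinner, hre]
    refine h3.trans ?_
    have hexp : (1 / Real.sqrt 2 * b + c / (2 * Real.sqrt 2) * ‖ψ‖) ^ 2
        = b ^ 2 / 2 + b * c * ‖ψ‖ / 2 + c ^ 2 * ‖ψ‖ ^ 2 / 8 := by
      have h2ne : Real.sqrt 2 ≠ 0 := ne_of_gt hs2pos
      field_simp
      ring_nf
      rw [hs2]
      ring
    rw [hexp]
    nlinarith [sq_nonneg (2 * b - 3 * c * ‖ψ‖)]
  have hrhs0 : 0 ≤ (1 / Real.sqrt 2) * b + (c / (2 * Real.sqrt 2)) * ‖ψ‖ := by positivity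
  calc ‖∑' j, (starRingEnd ℂ) (α j) • v j‖ ≤ Real.sqrt (c * ∑' j, ‖v j‖ ^ 2) := by
        rw [← h2']; exact h1.trans h2
    _ ≤ Real.sqrt (((1 / Real.sqrt 2) * b + (c / (2 * Real.sqrt 2)) * ‖ψ‖) ^ 2) :=
        Real.sqrt_le_sqrt hkey
    _ = (1 / Real.sqrt 2) * b + (c / (2 * Real.sqrt 2)) * ‖ψ‖ := Real.sqrt_sq hrhs0
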